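/- For τ₀, τ₁ ∈ (0, 1/2), if g(τ₀, 2) > 2·g(τ₁, 3) where g(x,k) = x^{kx}(1-x)^{k(1-x)}, then τ₀ < τ₁. -/

import Mathlib

noncomputable def fent (x : ℝ) : ℝ := x * Real.log x + (1 - x) * Real.log (1 - x)

lemma fent_hasDeriv {x : ℝ} (hx : 0 < x) (hx2 : x < 1) :
    HasDerivAt fent (Real.log x - Real.log (1 - x)) x := by
  have h1 : HasDerivAt (fun x : ℝ => x * Real.log x) (Real.log x + 1) x :=
    Real.hasDerivAt_mul_log hx.ne'
  have hu : HasDerivAt (fun x : ℝ => 1 - x) (-1) x := by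
    simpa using (hasDerivAt_id x).const_sub 1
  have h2 : HasDerivAt (fun x : ℝ => (1 - x) * Real.log (1 - x))
      ((Real.log (1 - x) + 1) * (-1)) x :=
    (Real.hasDerivAt_mul_log (x := 1 - x) (by linarith)).comp x hu
  have := h1.add h2
  exact this.congr_deriv (by ring)

lemma fent_anti : AntitoneOn fent (Set.Icc (0:ℝ) (1/2)) := by
  have hcont : Continuous fent := by
    have : Continuous fun x : ℝ => (1 - x) * Real.log (1 - x) :=
      Real.continuous_mul_log.comp (continuous_const.sub continuous_id)
    exact Real.continuous_mul_log.add this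
  have : StrictAntiOn fent (Set.Icc (0:ℝ) (1/2)) := by
    apply strictAntiOn_of_deriv_neg (convex_Icc _ _) hcont.continuousOn
    intro x hx
    rw [interior_Icc] at hx
    obtain ⟨hx1, hx2⟩ := hx
    rw [(fent_hasDeriv hx1 (by linarith)).deriv]
    have : Real.log x < Real.log (1 - x) := Real.log_lt_log hx1 (by linarith)
    linarith
  exact this.antitoneOn

lemma fent_half : fent (1/2) = -Real.log 2 := by
  have : fent (1/2) = Real.log (1/2) := by
    unfold fent; norm_num; ring
  rw [this, one_div, Real.log_inv]

theorem suff_less_implies_less (τ₀ τ₁ : ℝ)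
    (h₀ : τ₀ ∈ Set.Ioo (0 : ℝ) (1/2)) (h₁ : τ₁ ∈ Set.Ioo (0 : ℝ) (1/2))
    (h : τ₀ ^ ((2:ℝ)*τ₀) * (1 - τ₀) ^ ((2:ℝ)*(1 - τ₀)) >
      2 * (τ₁ ^ ((3:ℝ)*τ₁) * (1 - τ₁) ^ ((3:ℝ)*(1 - τ₁)))) :
    τ₀ < τ₁ := by
  obtain ⟨ha, hb⟩ := h₀
  obtain ⟨hc, hd⟩ := h₁
  by_contra hle
  push_neg at hle
  have h1τ₀ : 0 < 1 - τ₀ := by linarith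
  have h1τ₁ : 0 < 1 - τ₁ := by linarith
  have e0 : τ₀ ^ ((2:ℝ)*τ₀) * (1 - τ₀) ^ ((2:ℝ)*(1 - τ₀)) = Real.exp (2 * fent τ₀) := by
    rw [Real.rpow_def_of_pos ha, Real.rpow_def_of_pos h1τ₀, ← Real.exp_add]
    congr 1; unfold fent; ring
  have e1 : τ₁ ^ ((3:ℝ)*τ₁) * (1 - τ₁) ^ ((3:ℝ)*(1 - τ₁)) = Real.exp (3 * fent τ₁) := by
    rw [Real.rpow_def_of_pos hc, Real.rpow_def_of_pos h1τ₁, ← Real.exp_add]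
    congr 1; unfold fent; ring
  rw [e0, e1] at h
  have hA : fent τ₀ ≤ fent τ₁ :=
    fent_anti ⟨hc.le, hd.le⟩ ⟨ha.le, hb.le⟩ hle
  have hB : -Real.log 2 ≤ fent τ₁ := by
    have := fent_anti ⟨hc.le, hd.le⟩ ⟨by norm_num, le_refl _⟩ hd.le
    rwa [fent_half] at this
  have hcontra : Real.exp (2 * fent τ₀) ≤ 2 * Real.exp (3 * fent τ₁) := by
    rw [show (2:ℝ) * Real.exp (3 * fent τ₁) = Real.exp (Real.log 2 + 3 * fent τ₁) by
      rw [Real.exp_add, Real.exp_log]; norm_num]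
    exact Real.exp_le_exp.2 (by linarith)
  linarith
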